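/- Let Ω be a finite set, p a prime, and G ≤ Sym(Ω) a p-group. Then the 2-closure G^(2) is also a p-group. -/

import Mathlib

open Equiv MulAction

def twoClosure {Ω : Type*} (G : Subgroup (Equiv.Perm Ω)) : Subgroup (Equiv.Perm Ω) where
  carrier := {g | ∀ α β : Ω, ∃ h ∈ G, g α = h α ∧ g β = h β}
  one_mem' := fun α β => ⟨1, G.one_mem, rfl, rfl⟩
  mul_mem' := by
    intro a b ha hb α β
    obtain ⟨h, hh, h1, h2⟩ := hb α β
    obtain ⟨k, hk, k1, k2⟩ := ha (h α) (h β)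
    exact ⟨k * h, G.mul_mem hk hh, by simp [Equiv.Perm.mul_apply, h1, k1],
      by simp [Equiv.Perm.mul_apply, h2, k2]⟩
  inv_mem' := by
    intro a ha α β
    obtain ⟨h, hh, h1, h2⟩ := ha (a⁻¹ α) (a⁻¹ β)
    refine ⟨h⁻¹, G.inv_mem hh, ?_, ?_⟩
    · have := congrArg (fun z => h⁻¹ z) h1
      simpa using this.symm
    · have := congrArg (fun z => h⁻¹ z) h2
      simpa using this.symm

namespace TwoClos

theorem pgroup_of_hom {p : ℕ} {H K : Type*} [Group H] [Group K] (f : H →* K)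
    (h1 : IsPGroup p f.ker) (h2 : IsPGroup p K) : IsPGroup p H := by
  intro g
  obtain ⟨k, hk⟩ := h2 (f g)
  have hmem : g ^ p ^ k ∈ f.ker := by
    rw [MonoidHom.mem_ker, map_pow, hk]
  obtain ⟨m, hm⟩ := h1 ⟨_, hmem⟩
  refine ⟨k + m, ?_⟩
  have : (g ^ p ^ k) ^ p ^ m = 1 := by
    have := congrArg (Subtype.val) hm
    simpa using this
  rw [pow_add, pow_mul]
  exact this

theorem pgroup_pi {p : ℕ} {ι : Type*} [Fintype ι] {H : ι → Type*} [∀ i, Group (H i)]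
    (h : ∀ i, IsPGroup p (H i)) : IsPGroup p (∀ i, H i) := by
  intro g
  choose k hk using fun i => h i (g i)
  refine ⟨Finset.univ.sup k, funext fun i => ?_⟩
  have hle : k i ≤ Finset.univ.sup k := Finset.le_sup (Finset.mem_univ i)
  have : g i ^ p ^ Finset.univ.sup k = 1 := by
    rw [← Nat.add_sub_cancel' hle, pow_add, pow_mul, hk i, one_pow]
  simpa using this

section OrbitQuot

variable {Ω : Type*} (M : Subgroup (Perm Ω))

/-- permutations mapping `M`-orbits to `M`-orbits -/
def GoodPerm (g : Perm Ω) : Prop := ∀ α β : Ω, β ∈ orbit M α → g β ∈ orbit M (g α)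

def orbMk (α : Ω) : Quotient (orbitRel M Ω) := Quotient.mk (orbitRel M Ω) α

theorem orbMk_eq {M : Subgroup (Perm Ω)} {α β : Ω} :
    orbMk M α = orbMk M β ↔ α ∈ orbit M β := by
  unfold orbMk
  rw [Quotient.eq]
  exact orbitRel_apply

def permLift (g : Perm Ω) (h1 : GoodPerm M g) (h2 : GoodPerm M g⁻¹) :
    Perm (Quotient (orbitRel M Ω)) where
  toFun := Quotient.lift (fun a => orbMk M (g a))
    (fun a b hab => orbMk_eq.mpr (h1 b a (orbitRel_apply.mp hab)))
  invFun := Quotient.lift (fun a => orbMk M (g⁻¹ a))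
    (fun a b hab => orbMk_eq.mpr (h2 b a (orbitRel_apply.mp hab)))
  left_inv := by
    rintro ⟨a⟩
    show orbMk M (g⁻¹ (g a)) = _
    rw [show g⁻¹ (g a) = a from g.symm_apply_apply a]
    rfl
  right_inv := by
    rintro ⟨a⟩
    show orbMk M (g (g⁻¹ a)) = _
    rw [show g (g⁻¹ a) = a from g.apply_symm_apply a]
    rfl

theorem permLift_mk (g : Perm Ω) (h1 : GoodPerm M g) (h2 : GoodPerm M g⁻¹) (α : Ω) :
    permLift M g h1 h2 (orbMk M α) = orbMk M (g α) := rfl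

end OrbitQuot

open scoped Pointwise

theorem key {Ω : Type} [Fintype Ω] {p : ℕ} (hp : p.Prime)
    (G M : Subgroup (Perm Ω)) (hMG : M ≤ G)
    (hnorm : ∀ g ∈ G, ∀ m ∈ M, g * m * g⁻¹ ∈ M)
    (hG : IsPGroup p G)
    (horb : ∀ α : Ω, orbit M α ≠ Set.univ)
    (hnontriv : ∃ m ∈ M, ∃ δ : Ω, m δ ≠ δ)
    (IH : ∀ (Ω' : Type) (_ : Fintype Ω') (G' : Subgroup (Perm Ω')),
      Fintype.card Ω' < Fintype.card Ω → IsPGroup p G' → IsPGroup p (twoClosure G')) :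
    IsPGroup p (twoClosure G) := by
  classical
  -- orbits of M map to orbits of M under elements of G and of the 2-closure
  have hGorb : ∀ h ∈ G, ∀ α β : Ω, β ∈ orbit M α → h β ∈ orbit M (h α) := by
    intro h hh α β hβ
    obtain ⟨m, hm⟩ := hβ
    refine ⟨⟨h * (m : Perm Ω) * h⁻¹, hnorm h hh _ m.2⟩, ?_⟩
    have : (m : Perm Ω) • α = β := hm
    simp only [Subgroup.mk_smul, Perm.smul_def] at this ⊢
    simp [this]
  have hCorb : ∀ g ∈ twoClosure G, ∀ α β : Ω, β ∈ orbit M α → g β ∈ orbit M (g α) := by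
    intro g hg α β hβ
    obtain ⟨h, hh, h1, h2⟩ := hg α β
    rw [h1, h2]
    exact hGorb h hh α β hβ
  set B := Quotient (orbitRel M Ω) with hB
  haveI instB : Fintype B := Quotient.fintype _
  -- the induced homomorphisms on the orbit quotient
  let Φ : ↥(twoClosure G) →* Perm B := MonoidHom.mk'
    (fun g => permLift M (g : Perm Ω) (hCorb _ g.2)
      (hCorb _ ((twoClosure G).inv_mem g.2)))
    (by
      intro g₁ g₂
      apply Equiv.ext
      rintro ⟨a⟩
      rfl)
  let Ψ : ↥G →* Perm B := MonoidHom.mk'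
    (fun h => permLift M (h : Perm Ω) (hGorb _ h.2) (hGorb _ (G.inv_mem h.2)))
    (by
      intro g₁ g₂
      apply Equiv.ext
      rintro ⟨a⟩
      rfl)
  have hπsurj : Function.Surjective (orbMk M : Ω → B) := fun q =>
    Quotient.inductionOn q fun a => ⟨a, rfl⟩
  obtain ⟨m₀, hm₀M, δ, hδ⟩ := hnontriv
  have hcardB : Fintype.card B < Fintype.card Ω := by
    apply Fintype.card_lt_of_surjective_not_injective _ hπsurj
    intro hinj
    apply hδ
    exact hinj (orbMk_eq.mpr ⟨⟨m₀, hm₀M⟩, rfl⟩)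
  have hΨrange : IsPGroup p Ψ.range :=
    hG.of_surjective Ψ.rangeRestrict Ψ.rangeRestrict_surjective
  have hΦmem : ∀ g : ↥(twoClosure G), Φ g ∈ twoClosure Ψ.range := by
    intro g b₁ b₂
    obtain ⟨α, rfl⟩ := hπsurj b₁
    obtain ⟨β, rfl⟩ := hπsurj b₂
    obtain ⟨h, hh, h1, h2⟩ := g.2 α β
    refine ⟨Ψ ⟨h, hh⟩, ⟨⟨h, hh⟩, rfl⟩, ?_, ?_⟩
    · show orbMk M ((g : Perm Ω) α) = orbMk M (h α)
      rw [h1]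
    · show orbMk M ((g : Perm Ω) β) = orbMk M (h β)
      rw [h2]
  let Φ' : ↥(twoClosure G) →* ↥(twoClosure Ψ.range) :=
    Φ.codRestrict (twoClosure Ψ.range) hΦmem
  have hclosureB : IsPGroup p (twoClosure Ψ.range) := IH B instB Ψ.range hcardB hΨrange
  -- the kernel of Φ'
  have hkerfix : ∀ g : ↥(twoClosure G), g ∈ Φ'.ker → ∀ α : Ω,
      (g : Perm Ω) α ∈ orbit M α := by
    intro g hg α
    have h1 : Φ g = 1 := congrArg Subtype.val (MonoidHom.mem_ker.mp hg)
    have h2 : orbMk M ((g : Perm Ω) α) = orbMk M α := by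
      have := congrFun (congrArg (fun (e : Perm B) => (e : B → B)) h1) (orbMk M α)
      exact this
    exact orbMk_eq.mp h2
  -- fibers of the quotient map
  set fib : B → Set Ω := fun b => (orbMk M) ⁻¹' {b} with hfib
  haveI instFib : ∀ b, Fintype (fib b) := fun b => (Set.toFinite (fib b)).fintype
  have hfib_orbit : ∀ α : Ω, fib (orbMk M α) = orbit M α := by
    intro α
    ext x
    exact orbMk_eq
  have hfibcard : ∀ b : B, Fintype.card (fib b) < Fintype.card Ω := by
    intro b
    obtain ⟨α, rfl⟩ := hπsurj b
    have hss : fib (orbMk M α) ⊂ Set.univ := by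
      rw [Set.ssubset_univ_iff, hfib_orbit]
      exact horb α
    calc Fintype.card (fib (orbMk M α)) = Nat.card (fib (orbMk M α)) :=
          Fintype.card_eq_nat_card
      _ = (fib (orbMk M α)).ncard := Nat.card_coe_set_eq _
      _ < (Set.univ : Set Ω).ncard := Set.ncard_lt_ncard hss (Set.toFinite _)
      _ = Nat.card Ω := Set.ncard_univ Ω
      _ = Fintype.card Ω := (Fintype.card_eq_nat_card).symm
  -- the stabilizer of each fiber, and restriction to the fiber
  set Sb : B → Subgroup (Perm Ω) := fun b => G ⊓ stabilizer (Perm Ω) (fib b) with hSb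
  have hsub : ∀ (b : B) (h : ↥(Sb b)) (x : Ω), x ∈ fib b ↔ (h : Perm Ω) x ∈ fib b := by
    intro b h x
    have hst : (h : Perm Ω) • fib b = fib b := h.2.2
    conv_rhs => rw [← hst]
    exact (Set.smul_mem_smul_set_iff (a := (h : Perm Ω))).symm
  let ρ : ∀ b : B, ↥(Sb b) →* Perm (fib b) := fun b => MonoidHom.mk'
    (fun h => Perm.subtypePerm (h : Perm Ω) (fun x => (hsub b h x).symm))
    (by
      intro h₁ h₂
      apply Equiv.ext
      intro x
      rfl)
  have hΓ : ∀ b, IsPGroup p (ρ b).range := fun b =>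
    (hG.to_le inf_le_left).of_surjective (ρ b).rangeRestrict (ρ b).rangeRestrict_surjective
  have hΓclosure : ∀ b, IsPGroup p (twoClosure (ρ b).range) := fun b =>
    IH (fib b) (instFib b) (ρ b).range (hfibcard b) (hΓ b)
  -- each element of G maps fibers to fibers
  have hfibmap : ∀ (h : Perm Ω) (hh : h ∈ G) (b : B),
      h • fib b = fib (Ψ ⟨h, hh⟩ b) := by
    intro h hh b
    obtain ⟨α, rfl⟩ := hπsurj b
    ext z
    constructor
    · rintro ⟨w, hw, rfl⟩
      show orbMk M (h w) = Ψ ⟨h, hh⟩ (orbMk M α)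
      show orbMk M (h w) = orbMk M (h α)
      exact orbMk_eq.mpr (hGorb h hh α w (orbMk_eq.mp hw))
    · intro hz
      refine ⟨h⁻¹ z, ?_, by simp [Perm.smul_def]⟩
      have hz' : orbMk M z = orbMk M (h α) := hz
      have := hGorb h⁻¹ (G.inv_mem hh) (h α) z (orbMk_eq.mp hz')
      rw [show h⁻¹ (h α) = α from h.symm_apply_apply α] at this
      exact orbMk_eq.mpr this
  -- elements of the kernel preserve each fiber
  have hgfib : ∀ (g : ↥(twoClosure G)), g ∈ Φ'.ker → ∀ (b : B) (x : Ω),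
      x ∈ fib b ↔ (g : Perm Ω) x ∈ fib b := by
    intro g hg b x
    have hx := hkerfix g hg x
    constructor
    · intro hxb
      have : orbMk M ((g : Perm Ω) x) = orbMk M x := orbMk_eq.mpr hx
      show orbMk M ((g : Perm Ω) x) = b
      rw [this]
      exact hxb
    · intro hxb
      have : orbMk M ((g : Perm Ω) x) = orbMk M x := orbMk_eq.mpr hx
      show orbMk M x = b
      rw [← this]
      exact hxb
  let res : ∀ (g : ↥(twoClosure G)), g ∈ Φ'.ker → ∀ b : B, Perm (fib b) := fun g hg b =>
    Perm.subtypePerm (g : Perm Ω) (fun x => (hgfib g hg b x).symm)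
  have hresmem : ∀ (g : ↥(twoClosure G)) (hg : g ∈ Φ'.ker) (b : B),
      res g hg b ∈ twoClosure (ρ b).range := by
    intro g hg b x y
    obtain ⟨h, hh, h1, h2⟩ := g.2 x.1 y.1
    have hsb : h ∈ Sb b := by
      refine ⟨hh, ?_⟩
      show h • fib b = fib b
      have hb : orbMk M x.1 = b := x.2
      have hΨb : Ψ ⟨h, hh⟩ b = b := by
        conv_lhs => rw [← hb]
        show orbMk M (h x.1) = b
        rw [← h1, orbMk_eq.mpr (hkerfix g hg x.1)]
        exact hb
      rw [hfibmap h hh b, hΨb]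
    refine ⟨ρ b ⟨h, hsb⟩, ⟨⟨h, hsb⟩, rfl⟩, ?_, ?_⟩
    · exact Subtype.ext h1
    · exact Subtype.ext h2
  let ρker : ↥Φ'.ker →* (∀ b : B, ↥(twoClosure (ρ b).range)) := MonoidHom.mk'
    (fun g => fun b => ⟨res g.1 g.2 b, hresmem g.1 g.2 b⟩)
    (by
      intro g₁ g₂
      funext b
      refine Subtype.ext (Equiv.ext fun x => Subtype.ext ?_)
      rfl)
  have hρinj : Function.Injective ρker := by
    rw [injective_iff_map_eq_one]
    intro g hgone
    have hfix : ∀ x : Ω, ((g.1 : ↥(twoClosure G)) : Perm Ω) x = x := by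
      intro x
      have hb := congrFun hgone (orbMk M x)
      have := congrArg (fun e => (((e : ↥(twoClosure (ρ (orbMk M x)).range)) : Perm (fib (orbMk M x))) ⟨x, rfl⟩ : fib (orbMk M x)).1) hb
      exact this
    refine Subtype.ext (Subtype.ext (Equiv.ext hfix))
  have hkerP : IsPGroup p Φ'.ker :=
    (pgroup_pi hΓclosure).of_injective ρker hρinj
  exact pgroup_of_hom Φ' hkerP hclosureB

theorem main0 (n : ℕ) : ∀ (Ω : Type) (instΩ : Fintype Ω) (G : Subgroup (Perm Ω)) (p : ℕ),
    p.Prime → Fintype.card Ω ≤ n → IsPGroup p G → IsPGroup p (twoClosure G) := by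
  induction n with
  | zero =>
    intro Ω instΩ G p hp hcard hG
    letI := instΩ
    haveI : IsEmpty Ω := by
      rw [← Fintype.card_eq_zero_iff]
      omega
    intro g
    refine ⟨0, ?_⟩
    have hg1 : g = 1 := Subtype.ext (Equiv.ext fun x => isEmptyElim x)
    rw [hg1]
    simp
  | succ n ihn =>
    intro Ω instΩ G p hp hcard hG
    letI := instΩ
    have IH : ∀ (Ω' : Type) (_ : Fintype Ω') (G' : Subgroup (Perm Ω')),
        Fintype.card Ω' < Fintype.card Ω → IsPGroup p G' → IsPGroup p (twoClosure G') :=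
      fun Ω' i' G' hlt hpg => ihn Ω' i' G' p hp (by omega) hpg
    rcases isEmpty_or_nonempty Ω with hempty | hne
    · intro g
      refine ⟨0, ?_⟩
      have hg1 : g = 1 := Subtype.ext (Equiv.ext fun x => isEmptyElim x)
      rw [hg1]
      simp
    · by_cases hreg : ∃ α₀ : Ω, ∀ h ∈ G, h α₀ = α₀ → h = 1
      · -- a point with trivial stabilizer: the 2-closure is contained in G
        obtain ⟨α₀, hα₀⟩ := hreg
        have hle : twoClosure G ≤ G := by
          intro g hg
          obtain ⟨h, hh, hgh, -⟩ := hg α₀ α₀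
          have hall : ∀ β, g β = h β := by
            intro β
            obtain ⟨h', hh', e1, e2⟩ := hg α₀ β
            have hfix : (h⁻¹ * h') α₀ = α₀ := by
              have : h' α₀ = h α₀ := by rw [← e1, hgh]
              simp [Perm.mul_apply, this]
            have h1 : h⁻¹ * h' = 1 := hα₀ _ (G.mul_mem (G.inv_mem hh) hh') hfix
            have h2 : h = h' := inv_mul_eq_one.mp h1
            rw [e2, ← h2]
          have : g = h := Equiv.ext hall
          rw [this]
          exact hh
        exact hG.to_le hle
      · push_neg at hreg
        by_cases htrans : ∀ α β : Ω, ∃ h ∈ G, h α = β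
        · -- transitive case
          obtain ⟨α₀⟩ := hne
          obtain ⟨h₁, hh₁G, hh₁fix, hh₁ne⟩ := hreg α₀
          obtain ⟨δ, hδ⟩ : ∃ δ, h₁ δ ≠ δ := by
            by_contra hc
            push_neg at hc
            exact hh₁ne (Equiv.ext hc)
          obtain ⟨k, hkG, hkα₀⟩ := htrans α₀ δ
          have hδα₀ : δ ≠ α₀ := by
            intro e
            apply hδ
            rw [e]
            exact hh₁fix
          haveI : Fact p.Prime := ⟨hp⟩
          haveI : Group.IsNilpotent ↥G := hG.isNilpotent
          have hnc : NormalizerCondition ↥G := normalizerCondition_of_isNilpotent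
          haveI : Finite (Subgroup ↥G) :=
            Finite.of_injective (fun H : Subgroup ↥G => (H : Set ↥G)) SetLike.coe_injective
          set S : Subgroup (Perm Ω) := G ⊓ stabilizer (Perm Ω) α₀ with hSdef
          set S' : Subgroup ↥G := S.subgroupOf G with hS'def
          have hS'netop : S' ≠ ⊤ := by
            intro htop
            have hkS : k ∈ S := by
              have : (⟨k, hkG⟩ : ↥G) ∈ S' := htop ▸ Subgroup.mem_top _
              exact Subgroup.mem_subgroupOf.mp this
            have : k • α₀ = α₀ := hkS.2
            rw [Perm.smul_def, hkα₀] at this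
            exact hδα₀ this
          rcases eq_top_or_exists_le_coatom S' with h | ⟨M', hM'coatom, hSM'⟩
          · exact absurd h hS'netop
          have hM'normal : M'.Normal := Subgroup.NormalizerCondition.normal_of_coatom M' hnc hM'coatom
          set M : Subgroup (Perm Ω) := M'.map G.subtype with hMdef
          have hMG : M ≤ G := Subgroup.map_subtype_le M'
          have hSM : S ≤ M := by
            intro s hs
            have hsG : s ∈ G := hs.1
            have : (⟨s, hsG⟩ : ↥G) ∈ M' := hSM' (Subgroup.mem_subgroupOf.mpr hs)
            exact ⟨⟨s, hsG⟩, this, rfl⟩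
          have hnorm : ∀ g ∈ G, ∀ m ∈ M, g * m * g⁻¹ ∈ M := by
            intro g hg m hm
            obtain ⟨m', hm', rfl⟩ := hm
            exact ⟨⟨g, hg⟩ * m' * ⟨g, hg⟩⁻¹, hM'normal.conj_mem m' hm' ⟨g, hg⟩, rfl⟩
          have hMne : M ≠ G := by
            intro hMeqG
            apply hM'coatom.1
            ext x
            simp only [Subgroup.mem_top, iff_true]
            have hxM : (x : Perm Ω) ∈ M := by rw [hMeqG]; exact x.2
            obtain ⟨y, hy, hyx⟩ := hxM
            have : y = x := Subtype.ext hyx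
            rwa [← this]
          have hh₁S : h₁ ∈ S := ⟨hh₁G, hh₁fix⟩
          have hnontriv : ∃ m ∈ M, ∃ δ' : Ω, m δ' ≠ δ' := ⟨h₁, hSM hh₁S, δ, hδ⟩
          have horb : ∀ γ : Ω, orbit M γ ≠ Set.univ := by
            have hα₀orb : orbit M α₀ ≠ Set.univ := by
              intro huniv
              apply hMne
              apply le_antisymm hMG
              intro g hg
              have hmem : g α₀ ∈ orbit M α₀ := huniv ▸ Set.mem_univ _
              obtain ⟨m, hm⟩ := hmem
              have hmS : ((m : Perm Ω))⁻¹ * g ∈ S := by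
                refine ⟨G.mul_mem (G.inv_mem (hMG m.2)) hg, ?_⟩
                show ((m : Perm Ω)⁻¹ * g) • α₀ = α₀
                have hm' : (m : Perm Ω) α₀ = g α₀ := hm
                simp [Perm.smul_def, Perm.mul_apply, ← hm']
              have hgm : g = (m : Perm Ω) * ((m : Perm Ω)⁻¹ * g) := by group
              rw [hgm]
              exact M.mul_mem m.2 (hSM hmS)
            intro γ huniv
            apply hα₀orb
            have hmem : α₀ ∈ orbit M γ := huniv ▸ Set.mem_univ _
            rw [orbit_eq_iff.mpr hmem]
            exact huniv
          exact key hp G M hMG hnorm hG horb hnontriv IH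
        · -- intransitive case
          push_neg at htrans
          obtain ⟨α, β, hαβ⟩ := htrans
          obtain ⟨α₁⟩ := hne
          obtain ⟨h₁, hh₁G, -, hh₁ne⟩ := hreg α₁
          obtain ⟨δ, hδ⟩ : ∃ δ, h₁ δ ≠ δ := by
            by_contra hc
            push_neg at hc
            exact hh₁ne (Equiv.ext hc)
          have hnorm : ∀ g ∈ G, ∀ m ∈ G, g * m * g⁻¹ ∈ G := fun g hg m hm =>
            G.mul_mem (G.mul_mem hg hm) (G.inv_mem hg)
          have horb : ∀ γ : Ω, orbit G γ ≠ Set.univ := by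
            have hαorb : orbit G α ≠ Set.univ := by
              intro huniv
              have hmem : β ∈ orbit G α := huniv ▸ Set.mem_univ _
              obtain ⟨m, hm⟩ := hmem
              exact hαβ (m : Perm Ω) m.2 hm
            intro γ huniv
            apply hαorb
            have hmem : α ∈ orbit G γ := huniv ▸ Set.mem_univ _
            rw [orbit_eq_iff.mpr hmem]
            exact huniv
          exact key hp G G le_rfl hnorm hG horb ⟨h₁, hh₁G, δ, hδ⟩ IH

/-- `Equiv.permCongr` as a `MulEquiv`. -/
def permCongrMul {Ω Ω' : Type*} (e : Ω ≃ Ω') : Perm Ω ≃* Perm Ω' :=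
  { Equiv.permCongr e with
    map_mul' := fun f g => by
      ext x
      simp [Equiv.permCongr_apply] }

end TwoClos

theorem two_closure_of_p_group_is_p_group
    {Ω : Type*} [Fintype Ω] {p : ℕ} (hp : p.Prime)
    (G : Subgroup (Equiv.Perm Ω)) (hG : IsPGroup p G) :
    IsPGroup p (twoClosure G) := by
  classical
  set e : Ω ≃ Fin (Fintype.card Ω) := Fintype.equivFin Ω with he
  set F : Equiv.Perm Ω ≃* Equiv.Perm (Fin (Fintype.card Ω)) := TwoClos.permCongrMul e with hF
  set G' : Subgroup (Equiv.Perm (Fin (Fintype.card Ω))) := G.map F.toMonoidHom with hG'def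
  have hG' : IsPGroup p G' := hG.map F.toMonoidHom
  have hclosure' : IsPGroup p (twoClosure G') :=
    TwoClos.main0 (Fintype.card Ω) (Fin (Fintype.card Ω)) inferInstance G' p hp (by simp) hG'
  have hmem : ∀ g : ↥(twoClosure G), F (g : Equiv.Perm Ω) ∈ twoClosure G' := by
    intro g α' β'
    obtain ⟨h, hh, h1, h2⟩ := g.2 (e.symm α') (e.symm β')
    refine ⟨F h, ⟨h, hh, rfl⟩, ?_, ?_⟩
    · have hFapp : ∀ (q : Equiv.Perm Ω) (x : Fin (Fintype.card Ω)),
          F q x = e (q (e.symm x)) := fun q x => rfl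
      rw [hFapp, hFapp, h1]
    · have hFapp : ∀ (q : Equiv.Perm Ω) (x : Fin (Fintype.card Ω)),
          F q x = e (q (e.symm x)) := fun q x => rfl
      rw [hFapp, hFapp, h2]
  let φ : ↥(twoClosure G) →* ↥(twoClosure G') :=
    (F.toMonoidHom.comp (twoClosure G).subtype).codRestrict _ hmem
  have hinj : Function.Injective φ := by
    intro a b hab
    have h1 : F (a : Equiv.Perm Ω) = F (b : Equiv.Perm Ω) := congrArg Subtype.val hab
    exact Subtype.ext (F.injective h1)
  exact hclosure'.of_injective φ hinj
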